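/- Every integer multiple of g = gcd(x_1, ..., x_k) that exceeds 2ks(s/g)(M−m) (with s, M, m as in the Bézout data) can be realized as a sum Σ_j x_{i_j} over a sequence with no two consecutive indices equal, provided k ≥ 3. -/

import Mathlib

open Finset

lemma mySumMapCount {k : ℕ} (x : Fin k → ℤ) (l : List (Fin k)) :
    (l.map x).sum = ∑ i, (l.count i : ℤ) * x i := by
  induction l with
  | nil => simp
  | cons a t ih =>
    rw [List.map_cons, List.sum_cons, ih]
    have h : ∀ i : Fin k, ((a :: t).count i : ℤ) * x i
        = (t.count i : ℤ) * x i + (if i = a then x i else 0) := by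
      intro i
      by_cases h : a = i
      · subst h; rw [List.count_cons]; simp; push_cast; ring
      · rw [List.count_cons]; simp [h, Ne.symm h]
    rw [Finset.sum_congr rfl (fun i _ => h i), Finset.sum_add_distrib,
      Finset.sum_ite_eq' Finset.univ a x]
    simp [add_comm]

lemma myChain {k : ℕ} (hk : 2 ≤ k) :
    ∀ (n : ℕ) (c : Fin k → ℕ) (p : Fin k), (∑ i, c i) = n →
      (∀ i, 2 * c i ≤ n + 1) → 2 * c p ≤ n →
      ∃ l : List (Fin k), l.Chain' (· ≠ ·) ∧ (∀ i, l.count i = c i) ∧ l.head? ≠ some p := by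
  intro n
  induction n with
  | zero =>
    intro c p hsum _ _
    refine ⟨[], List.isChain_nil, fun i => ?_, by simp⟩
    have := (Finset.sum_eq_zero_iff).mp hsum i (Finset.mem_univ i)
    simp [this]
  | succ n ih =>
    intro c p hsum hbal hp
    have hnt : Nontrivial (Fin k) := Fin.nontrivial_iff_two_le.mpr hk
    obtain ⟨q, hq⟩ := exists_ne p
    have hene : (Finset.univ.erase p).Nonempty :=
      ⟨q, Finset.mem_erase.mpr ⟨hq, Finset.mem_univ q⟩⟩
    obtain ⟨i, hi_mem, hi_max⟩ := Finset.exists_max_image _ c hene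
    have hip : i ≠ p := Finset.ne_of_mem_erase hi_mem
    have hsplit : c p + ∑ j ∈ Finset.univ.erase p, c j = n + 1 := by
      rw [Finset.add_sum_erase _ c (Finset.mem_univ p), hsum]
    have hci_pos : 1 ≤ c i := by
      by_contra h
      push_neg at h
      have h0 : c i = 0 := by omega
      have hz : ∑ j ∈ Finset.univ.erase p, c j = 0 :=
        Finset.sum_eq_zero (fun j hj => by have := hi_max j hj; omega)
      omega
    have hspliti : c i + ∑ j ∈ Finset.univ.erase i, c j = n + 1 := by
      rw [Finset.add_sum_erase _ c (Finset.mem_univ i), hsum]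
    set c' := Function.update c i (c i - 1) with hc'
    have hc'i : c' i = c i - 1 := Function.update_self i _ c
    have hc'j : ∀ j, j ≠ i → c' j = c j := fun j hj => Function.update_of_ne hj _ c
    have hsum' : ∑ j, c' j = n := by
      rw [Finset.sum_update_of_mem (Finset.mem_univ i)]
      have : Finset.univ \ {i} = Finset.univ.erase i := by
        rw [Finset.erase_eq]
      rw [this]
      omega
    have hpair : ∀ j, j ≠ i → c i + c j ≤ n + 1 := by
      intro j hj
      have : c j ≤ ∑ j' ∈ Finset.univ.erase i, c j' :=
        Finset.single_le_sum (fun _ _ => Nat.zero_le _)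
          (Finset.mem_erase.mpr ⟨hj, Finset.mem_univ j⟩)
      omega
    have hbal' : ∀ j, 2 * c' j ≤ n + 1 := by
      intro j
      by_cases hji : j = i
      · subst hji; rw [hc'i]; have := hbal j; omega
      · rw [hc'j j hji]
        by_cases hjp : j = p
        · subst hjp; omega
        · have hle : c j ≤ c i :=
            hi_max j (Finset.mem_erase.mpr ⟨hjp, Finset.mem_univ j⟩)
          have := hpair j hji
          omega
    have hp' : 2 * c' i ≤ n := by
      rw [hc'i]; have := hbal i; omega
    obtain ⟨l', hch', hcnt', hhd'⟩ := ih c' i hsum' hbal' hp'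
    refine ⟨i :: l', ?_, ?_, ?_⟩
    · rw [List.Chain', List.isChain_cons]
      refine ⟨fun y hy => ?_, hch'⟩
      intro hiy
      subst hiy
      exact hhd' hy
    · intro j
      rw [List.count_cons]
      by_cases hji : j = i
      · subst hji
        simp only [beq_self_eq_true, if_true]
        rw [hcnt' j, hc'i]
        omega
      · have hb : (i == j) = false := by simp [Ne.symm hji]
        simp only [hb, Bool.false_eq_true, if_false, add_zero]
        rw [hcnt' j, hc'j j hji]
    · intro hcon
      rw [List.head?_cons, Option.some.injEq] at hcon
      exact hip hcon

lemma myExistsList {k : ℕ} (hk : 2 ≤ k) (c : Fin k → ℕ) (hn : 1 ≤ ∑ i, c i)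
    (hbal : ∀ i, 2 * c i ≤ (∑ i, c i) + 1) :
    ∃ l : List (Fin k), l.Chain' (· ≠ ·) ∧ ∀ i, l.count i = c i := by
  have hk0 : 0 < k := by omega
  have : Nonempty (Fin k) := ⟨⟨0, hk0⟩⟩
  obtain ⟨p, _, hmin⟩ := Finset.exists_min_image Finset.univ c Finset.univ_nonempty
  have h1 : k * c p ≤ ∑ i, c i := by
    have := Finset.card_nsmul_le_sum Finset.univ c (c p) (fun j _ => hmin j (Finset.mem_univ j))
    simpa [Finset.card_univ, mul_comm] using this
  have h2 : 2 * c p ≤ ∑ i, c i := by nlinarith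
  obtain ⟨l, hch, hcnt, _⟩ := myChain hk (∑ i, c i) c p rfl hbal h2
  exact ⟨l, hch, hcnt⟩



/-- every sufficiently large multiple of the gcd is an admissible sum. -/
theorem stmt2 (k : ℕ) (hk : 3 ≤ k) (x a : Fin k → ℤ) (hx : ∀ i, 0 < x i)
    (hne : (Finset.univ : Finset (Fin k)).Nonempty)
    (g s M m : ℤ)
    (hg : g = Finset.univ.gcd x)
    (hs : s = ∑ i, x i)
    (ha : g = ∑ i, a i * x i)
    (hM : M = Finset.univ.sup' hne a)
    (hm : m = Finset.univ.inf' hne a) :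
    ∀ C : ℤ, g ∣ C → 2 * k * s * (s / g) * (M - m) < C →
      ∃ l : List (Fin k), l.Chain' (· ≠ ·) ∧ (l.map x).sum = C := by
  intro C hdvd hbig
  have hk3 : (3 : ℤ) ≤ (k : ℤ) := by exact_mod_cast hk
  have hgnn : 0 ≤ g := by
    rw [hg]
    exact Int.nonneg_of_normalize_eq_self Finset.normalize_gcd
  have i0 : Fin k := ⟨0, by omega⟩
  have hg0 : 0 < g := by
    rcases lt_or_eq_of_le hgnn with h | h
    · exact h
    · exfalso
      have := Finset.gcd_eq_zero_iff.mp (hg ▸ h.symm) i0 (Finset.mem_univ i0)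
      exact absurd this (ne_of_gt (hx i0))
  have hgs : g ∣ s := by
    rw [hs]
    exact Finset.dvd_sum (fun i _ => hg ▸ Finset.gcd_dvd (Finset.mem_univ i))
  have hs0 : 0 < s := by
    rw [hs]; exact Finset.sum_pos (fun i _ => hx i) hne
  obtain ⟨s', hs'def⟩ : ∃ z : ℤ, s / g = z := ⟨_, rfl⟩
  rw [hs'def] at hbig
  have hss' : g * s' = s := by rw [← hs'def]; exact Int.mul_ediv_cancel' hgs
  have hs'0 : 0 < s' := by
    rcases lt_trichotomy s' 0 with h | h | h
    · linarith [mul_neg_of_pos_of_neg hg0 h, hss', hs0]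
    · rw [h, mul_zero] at hss'; omega
    · exact h
  obtain ⟨w, hwdef⟩ : ∃ z : ℤ, C / g = z := ⟨_, rfl⟩
  have hCw : g * w = C := by rw [← hwdef]; exact Int.mul_ediv_cancel' hdvd
  obtain ⟨u, hudef⟩ : ∃ z : ℤ, w % s' = z := ⟨_, rfl⟩
  obtain ⟨v, hvdef⟩ : ∃ z : ℤ, w / s' = z := ⟨_, rfl⟩
  have hu0 : 0 ≤ u := hudef ▸ Int.emod_nonneg _ (ne_of_gt hs'0)
  have hus : u < s' := hudef ▸ Int.emod_lt_of_pos _ hs'0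
  have hw : s' * v + u = w := by rw [← hudef, ← hvdef]; exact Int.mul_ediv_add_emod w s'
  have hma : ∀ i, m ≤ a i ∧ a i ≤ M := fun i =>
    ⟨hm ▸ Finset.inf'_le _ (Finset.mem_univ i), hM ▸ Finset.le_sup' _ (Finset.mem_univ i)⟩
  have hMm : 0 ≤ M - m := by have := hma i0; omega
  have hM0 : 0 ≤ M := by
    by_contra h
    push_neg at h
    have hlt : ∑ i, a i * x i < ∑ _i : Fin k, (0 : ℤ) :=
      Finset.sum_lt_sum_of_nonempty hne
        (fun i _ => mul_neg_of_neg_of_pos (lt_of_le_of_lt (hma i).2 h) (hx i))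
    rw [Finset.sum_const, smul_zero] at hlt
    omega
  obtain ⟨E, hEdef⟩ : ∃ z : ℤ, z = s' * (M - m) := ⟨_, rfl⟩
  have hE0 : 0 ≤ E := hEdef ▸ mul_nonneg hs'0.le hMm
  -- w is big
  have hwbig : 2 * k * E * s' < w := by
    have h1 : g * (2 * k * E * s') < g * w := by
      rw [hCw]
      calc g * (2 * (k:ℤ) * E * s') = 2 * k * (g * s') * s' * (M - m) := by
            rw [hEdef]; ring
        _ = 2 * k * s * s' * (M - m) := by rw [hss']
        _ < C := hbig
    exact lt_of_mul_lt_mul_left h1 hgnn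
  -- v is big
  have hvE : 2 * k * E ≤ v := by
    have hvs : v * s' = w - u := by linear_combination hw
    have h1 : (2 * k * E - 1) * s' < v * s' := by
      rw [hvs]; nlinarith [hwbig, hus]
    have h2 : 2 * k * E - 1 < v := lt_of_mul_lt_mul_right h1 hs'0.le
    omega
  -- bounds on coefficients
  have hum : -E ≤ u * m := by
    rcases le_or_gt 0 m with h | h
    · linarith [mul_nonneg hu0 h, hE0]
    · linarith [mul_le_mul_of_nonpos_right hus.le h.le,
        mul_nonneg hs'0.le hM0, hEdef]
  have hlow : ∀ i, v - E ≤ u * a i + v := by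
    intro i
    have : u * m ≤ u * a i := mul_le_mul_of_nonneg_left (hma i).1 hu0
    linarith
  have hnonneg : ∀ i, 0 ≤ u * a i + v := by
    intro i
    have h1 : (0:ℤ) ≤ (2 * (k:ℤ) - 1) * E :=
      mul_nonneg (by linarith) hE0
    linarith [hlow i, hvE]
  have hgap : ∀ i j, (u * a i + v) - (u * a j + v) ≤ E := by
    intro i j
    have h1 : u * (a i - a j) ≤ u * (M - m) :=
      mul_le_mul_of_nonneg_left (by linarith [(hma i).2, (hma j).1]) hu0
    have h2 : u * (M - m) ≤ s' * (M - m) := mul_le_mul_of_nonneg_right hus.le hMm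
    have h3 : (u * a i + v) - (u * a j + v) = u * (a i - a j) := by ring
    rw [h3, hEdef]
    linarith
  -- the coefficient vector
  obtain ⟨c, hc_cast⟩ : ∃ c : Fin k → ℕ, ∀ i, (c i : ℤ) = u * a i + v :=
    ⟨fun i => (u * a i + v).toNat, fun i => Int.toNat_of_nonneg (hnonneg i)⟩
  obtain ⟨n, hndef⟩ : ∃ n : ℕ, n = ∑ i, c i := ⟨_, rfl⟩
  have hn_cast : (n : ℤ) = ∑ i, (u * a i + v) := by
    rw [hndef]
    push_cast
    exact Finset.sum_congr rfl (fun i _ => hc_cast i)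
  have hsum_c : ∑ i, (c i : ℤ) * x i = C := by
    calc ∑ i, (c i : ℤ) * x i = ∑ i, (u * a i + v) * x i :=
          Finset.sum_congr rfl (fun i _ => by rw [hc_cast i])
      _ = u * (∑ i, a i * x i) + v * (∑ i, x i) := by
          rw [Finset.mul_sum, Finset.mul_sum, ← Finset.sum_add_distrib]
          exact Finset.sum_congr rfl (fun i _ => by ring)
      _ = u * g + v * s := by rw [← ha, ← hs]
      _ = C := by rw [← hss', ← hCw]; linear_combination g * hw
  -- balance in ℤ
  have hbalZ : ∀ i, 2 * ((c i : ℤ)) ≤ (n : ℤ) + 1 := by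
    intro i
    have hsumlb : (k : ℤ) * ((u * a i + v) - E) ≤ (n : ℤ) := by
      rw [hn_cast]
      have h1 : ∑ _j : Fin k, ((u * a i + v) - E) ≤ ∑ j, (u * a j + v) :=
        Finset.sum_le_sum (fun j _ => by linarith [hgap i j])
      rw [Finset.sum_const, Finset.card_univ, Fintype.card_fin, nsmul_eq_mul] at h1
      exact h1
    rw [hc_cast i]
    have hciLB : (2 * (k:ℤ) - 1) * E ≤ u * a i + v := by
      linarith [hlow i, hvE]
    have hq : (0:ℤ) ≤ (2*(k:ℤ)*(k:ℤ) - 6*(k:ℤ) + 2) * E :=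
      mul_nonneg (by nlinarith [hk3]) hE0
    have hint1 : ((k:ℤ) - 2) * ((2 * (k:ℤ) - 1) * E) ≤ ((k:ℤ) - 2) * (u * a i + v) :=
      mul_le_mul_of_nonneg_left hciLB (by linarith)
    linarith [hsumlb, hint1, hq]
  have hbalN : ∀ i, 2 * c i ≤ n + 1 := by
    intro i
    have := hbalZ i
    exact_mod_cast this
  have hC0 : 0 < C := by
    have h0 : 0 ≤ 2 * (k:ℤ) * s * s' * (M - m) :=
      mul_nonneg (mul_nonneg (mul_nonneg (by positivity) hs0.le) hs'0.le) hMm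
    linarith
  have hn1 : 1 ≤ n := by
    by_contra h
    push_neg at h
    have h0 : n = 0 := by omega
    have hz : ∀ i, c i = 0 := fun i =>
      (Finset.sum_eq_zero_iff).mp (hndef.symm.trans h0) i (Finset.mem_univ i)
    have : C = 0 := by
      rw [← hsum_c]
      exact Finset.sum_eq_zero (fun i _ => by rw [hz i]; simp)
    omega
  obtain ⟨l, hch, hcnt⟩ := myExistsList (by omega) c (hndef ▸ hn1) (fun i => hndef ▸ hbalN i)
  refine ⟨l, hch, ?_⟩
  rw [mySumMapCount x l, ← hsum_c]
  exact Finset.sum_congr rfl (fun i _ => by rw [hcnt i])
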